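/- Let ψ(λ) = α_0 λ + βλ² + ∫_{(0,∞)} π(dr)(e^{-λr} - 1 + λr 1_{r<1}) and ψ̃ be two spectrally positive Lévy exponents, and φ(λ) = κλ + ∫_{(0,∞)} ρ(dr)(1 - e^{-λr}) and φ̃ two subordinator exponents, with x > 0. Suppose x u(t,λ) + ∫_0^t φ(u(s,λ)) ds = x ũ(t,λ) + ∫_0^t φ̃(ũ(s,λ)) ds for all t, λ ≥ 0, where u, ũ solve ∂u/∂t = -ψ(u), ∂ũ/∂t = -ψ̃(ũ) with u(0,λ) = ũ(0,λ) = λ. If moreover it is not the case that ρ = π = 0, β = 0 and xα_0 = κ, then ψ = ψ̃ and φ = φ̃. -/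

import Mathlib

open MeasureTheory intervalIntegral
open scoped ENNReal

private lemma cube_le_exp {y : ℝ} (hy : 0 ≤ y) : y^3/27 ≤ Real.exp y := by
  have h := Real.add_one_le_exp (y/3)
  have h2 : (1 + y/3)^3 ≤ (Real.exp (y/3))^3 :=
    pow_le_pow_left₀ (by positivity) (by linarith) 3
  have h3 : (Real.exp (y/3))^3 = Real.exp y := by
    rw [← Real.exp_nat_mul]; congr 1; push_cast; ring
  nlinarith [sq_nonneg y, sq_nonneg (1 + y/3)]

private lemma r2exp_le {l r m : ℝ} (hl : 0 < l) (hr : 1 ≤ r) (hm : l/2 ≤ m) :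
    r^2 * Real.exp (-m * r) ≤ 216/l^3 := by
  have hr0 : (0:ℝ) < r := lt_of_lt_of_le one_pos hr
  have h1 : Real.exp (-m * r) ≤ Real.exp (-(l/2*r)) := by
    apply Real.exp_le_exp.2; nlinarith
  have h2 : (l/2*r)^3/27 ≤ Real.exp (l/2*r) := cube_le_exp (by positivity)
  have hep : (0:ℝ) < Real.exp (l/2*r) := Real.exp_pos _
  have h4 : Real.exp (-(l/2*r)) ≤ 27/(l/2*r)^3 := by
    rw [Real.exp_neg, le_div_iff₀ (by positivity)]
    have hinv := inv_pos.2 hep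
    have hc : (Real.exp (l/2*r))⁻¹ * Real.exp (l/2*r) = 1 := inv_mul_cancel₀ hep.ne'
    nlinarith
  have h6 : r^2 * Real.exp (-m*r) ≤ r^2 * (27/(l/2*r)^3) :=
    mul_le_mul_of_nonneg_left (h1.trans h4) (sq_nonneg r)
  have h7 : r^2 * (27/(l/2*r)^3) ≤ 216/l^3 := by
    have he : r^2 * (27/(l/2*r)^3) = 216/(l^3*r) := by
      field_simp; ring
    rw [he, div_le_div_iff₀ (by positivity) (by positivity)]
    nlinarith [pow_pos hl 3]
  linarith

private lemma one_sub_exp_le {y : ℝ} (hy : 0 ≤ y) :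
    0 ≤ 1 - Real.exp (-y) ∧ 1 - Real.exp (-y) ≤ y ∧ 1 - Real.exp (-y) ≤ 1 := by
  have h1 : Real.exp (-y) ≤ 1 := Real.exp_le_one_iff.2 (by linarith)
  have h2 := Real.add_one_le_exp (-y)
  have h3 := Real.exp_pos (-y)
  exact ⟨by linarith, by linarith, by linarith⟩

private lemma exp_sub_one_add_le {y : ℝ} (hy : 0 ≤ y) :
    |Real.exp (-y) - 1 + y| ≤ y^2 := by
  rcases le_or_gt y 1 with h | h
  · have := Real.abs_exp_sub_one_sub_id_le (x := -y) (by rw [abs_neg, abs_of_nonneg hy]; exact h)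
    calc |Real.exp (-y) - 1 + y| = |Real.exp (-y) - 1 - (-y)| := by ring_nf
      _ ≤ (-y)^2 := this
      _ = y^2 := by ring
  · obtain ⟨h0, hle, _⟩ := one_sub_exp_le hy
    rw [abs_of_nonneg (by nlinarith)]
    nlinarith

private lemma ae_pos_of_supp (μ : Measure ℝ) (h : μ (Set.Iic 0) = 0) : ∀ᵐ r ∂μ, 0 < r := by
  refine ae_iff.2 ?_
  have he : {r : ℝ | ¬ (0:ℝ) < r} = Set.Iic 0 := by ext r; simp
  rw [he]; exact h

private lemma integrable_min_one_r (ρ : Measure ℝ) (hsupp : ρ (Set.Iic 0) = 0)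
    (hint : ∫⁻ r, ENNReal.ofReal (min 1 r) ∂ρ ≠ ⊤) : Integrable (fun r => min 1 r) ρ := by
  refine ⟨(measurable_const.min measurable_id).aestronglyMeasurable, ?_⟩
  rw [hasFiniteIntegral_iff_ofReal ?_]
  · exact lt_top_iff_ne_top.2 hint
  · filter_upwards [ae_pos_of_supp ρ hsupp] with r hr
    exact le_min zero_le_one hr.le

private lemma integrable_min_one_sq (pi : Measure ℝ)
    (hint : ∫⁻ r, ENNReal.ofReal (min 1 (r^2)) ∂pi ≠ ⊤) : Integrable (fun r => min 1 (r^2)) pi := by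
  refine ⟨(measurable_const.min (measurable_id.pow_const 2)).aestronglyMeasurable, ?_⟩
  rw [hasFiniteIntegral_iff_ofReal
      (Filter.Eventually.of_forall fun r => le_min zero_le_one (sq_nonneg r))]
  exact lt_top_iff_ne_top.2 hint

private lemma bnd_r_exp {l m r : ℝ} (hl : 0 < l) (hr : 0 < r) (hm1 : l/2 ≤ m) :
    r * Real.exp (-m * r) ≤ (1 + 216/l^3) * min 1 r := by
  have he1 : Real.exp (-m * r) ≤ 1 := Real.exp_le_one_iff.2 (by nlinarith)
  have hep := Real.exp_pos (-m * r)
  rcases le_or_gt r 1 with h | h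
  · rw [min_eq_right h]
    have hC : (0:ℝ) ≤ 216/l^3 := by positivity
    nlinarith
  · rw [min_eq_left h.le]
    have h2 := r2exp_le hl h.le hm1
    have h3 : r * Real.exp (-m*r) ≤ r^2 * Real.exp (-m*r) := by
      nlinarith [mul_nonneg (by nlinarith : (0:ℝ) ≤ r^2 - r) hep.le]
    linarith

private lemma bnd_r2_exp {l m r : ℝ} (hl : 0 < l) (hr : 0 < r) (hm1 : l/2 ≤ m) :
    r^2 * Real.exp (-m * r) ≤ (1 + 216/l^3) * min 1 r := by
  have he1 : Real.exp (-m * r) ≤ 1 := Real.exp_le_one_iff.2 (by nlinarith)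
  have hep := Real.exp_pos (-m * r)
  rcases le_or_gt r 1 with h | h
  · rw [min_eq_right h]
    have hC : (0:ℝ) ≤ 216/l^3 := by positivity
    nlinarith
  · rw [min_eq_left h.le]
    have h2 := r2exp_le hl h.le hm1
    linarith

private lemma bnd_r2_exp_sq {l m r : ℝ} (hl : 0 < l) (hr : 0 < r) (hm1 : l/2 ≤ m) :
    r^2 * Real.exp (-m * r) ≤ (1 + 216/l^3) * min 1 (r^2) := by
  have he1 : Real.exp (-m * r) ≤ 1 := Real.exp_le_one_iff.2 (by nlinarith)
  have hep := Real.exp_pos (-m * r)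
  rcases le_or_gt r 1 with h | h
  · rw [min_eq_right (by nlinarith : r^2 ≤ 1)]
    have hC : (0:ℝ) ≤ 216/l^3 := by positivity
    nlinarith
  · rw [min_eq_left (by nlinarith : (1:ℝ) ≤ r^2)]
    have h2 := r2exp_le hl h.le hm1
    linarith

private lemma hasDerivAt_exp_neg (r m : ℝ) :
    HasDerivAt (fun m : ℝ => Real.exp (-m * r)) (Real.exp (-m * r) * -r) m := by
  have h1 : HasDerivAt (fun m : ℝ => -m * r) (-r) m := by
    simpa using ((hasDerivAt_id m).neg.mul_const r)
  exact h1.exp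

private lemma mem_ball_facts {l m : ℝ} (hl : 0 < l) (hm : m ∈ Metric.ball l (l/2)) :
    l/2 ≤ m ∧ m ≤ 2*l := by
  rw [Metric.mem_ball, Real.dist_eq, abs_lt] at hm
  constructor <;> linarith [hm.1, hm.2]

private lemma rho_deriv1 (ρ : Measure ℝ) (hsupp : ρ (Set.Iic 0) = 0)
    (hint : ∫⁻ r, ENNReal.ofReal (min 1 r) ∂ρ ≠ ⊤) {l : ℝ} (hl : 0 < l) :
    HasDerivAt (fun m => ∫ r, (1 - Real.exp (-m * r)) ∂ρ)
      (∫ r, r * Real.exp (-l * r) ∂ρ) l ∧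
    Integrable (fun r => r * Real.exp (-l * r)) ρ := by
  have hpos := ae_pos_of_supp ρ hsupp
  have hbi : Integrable (fun r => (1 + 216/l^3) * min 1 r) ρ :=
    (integrable_min_one_r ρ hsupp hint).const_mul _
  have H := hasDerivAt_integral_of_dominated_loc_of_deriv_le (μ := ρ) (x₀ := l)
      (F := fun m r => 1 - Real.exp (-m * r)) (F' := fun m r => r * Real.exp (-m * r))
      (bound := fun r => (1 + 216/l^3) * min 1 r) (Metric.ball_mem_nhds l (half_pos hl))
      (Filter.Eventually.of_forall fun m => Continuous.aestronglyMeasurable (by fun_prop))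
      ?_ (Continuous.aestronglyMeasurable (by fun_prop)) ?_ hbi ?_
  · exact ⟨H.2, H.1⟩
  · refine Integrable.mono' ((integrable_min_one_r ρ hsupp hint).const_mul (l+1))
      (Continuous.aestronglyMeasurable (by fun_prop)) ?_
    filter_upwards [hpos] with r hr
    have h3 := one_sub_exp_le (y := l*r) (by positivity)
    rw [show (-l * r) = -(l*r) by ring, Real.norm_eq_abs, abs_of_nonneg h3.1]
    rcases le_or_gt r 1 with h | h
    · rw [min_eq_right h]; nlinarith [h3.2.1]
    · rw [min_eq_left h.le]; nlinarith [h3.2.2]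
  · filter_upwards [hpos] with r hr
    intro m hm
    rw [Real.norm_eq_abs, abs_of_nonneg (by positivity)]
    exact bnd_r_exp hl hr (mem_ball_facts hl hm).1
  · refine Filter.Eventually.of_forall fun r => fun m hm => ?_
    have h2 := (hasDerivAt_exp_neg r m).const_sub 1
    have he : -(Real.exp (-m * r) * -r) = r * Real.exp (-m * r) := by ring
    rw [he] at h2
    exact h2

private lemma rho_deriv2 (ρ : Measure ℝ) (hsupp : ρ (Set.Iic 0) = 0)
    (hint : ∫⁻ r, ENNReal.ofReal (min 1 r) ∂ρ ≠ ⊤) {l : ℝ} (hl : 0 < l) :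
    HasDerivAt (fun m => ∫ r, r * Real.exp (-m * r) ∂ρ)
      (∫ r, -(r^2 * Real.exp (-l * r)) ∂ρ) l ∧
    Integrable (fun r => r^2 * Real.exp (-l * r)) ρ := by
  have hpos := ae_pos_of_supp ρ hsupp
  have hbi : Integrable (fun r => (1 + 216/l^3) * min 1 r) ρ :=
    (integrable_min_one_r ρ hsupp hint).const_mul _
  have H := hasDerivAt_integral_of_dominated_loc_of_deriv_le (μ := ρ) (x₀ := l)
      (F := fun m r => r * Real.exp (-m * r)) (F' := fun m r => -(r^2 * Real.exp (-m * r)))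
      (bound := fun r => (1 + 216/l^3) * min 1 r) (Metric.ball_mem_nhds l (half_pos hl))
      (Filter.Eventually.of_forall fun m => Continuous.aestronglyMeasurable (by fun_prop))
      ?_ (Continuous.aestronglyMeasurable (by fun_prop)) ?_ hbi ?_
  · refine ⟨H.2, ?_⟩
    have h3 : (fun r : ℝ => r^2 * Real.exp (-l * r)) = fun r => -(-(r^2 * Real.exp (-l * r))) := by
      funext r; ring
    rw [h3]; exact H.1.neg
  · refine Integrable.mono' hbi (Continuous.aestronglyMeasurable (by fun_prop)) ?_
    filter_upwards [hpos] with r hr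
    rw [Real.norm_eq_abs, abs_of_nonneg (by positivity)]
    exact bnd_r_exp hl hr (by linarith)
  · filter_upwards [hpos] with r hr
    intro m hm
    rw [Real.norm_eq_abs, abs_neg, abs_of_nonneg (by positivity)]
    exact bnd_r2_exp hl hr (mem_ball_facts hl hm).1
  · refine Filter.Eventually.of_forall fun r => fun m hm => ?_
    have h2 := (hasDerivAt_exp_neg r m).const_mul r
    have he : r * (Real.exp (-m * r) * -r) = -(r^2 * Real.exp (-m * r)) := by ring
    rw [he] at h2
    exact h2

private lemma bnd_pi_F {l r : ℝ} (hl : 0 < l) (hr : 0 < r) :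
    |Real.exp (-l * r) - 1 + l * r * (if r < 1 then (1:ℝ) else 0)| ≤ (l^2+1) * min 1 (r^2) := by
  rcases lt_or_ge r 1 with h | h
  · rw [if_pos h, mul_one, min_eq_right (by nlinarith : r^2 ≤ 1),
      show (-l * r) = -(l*r) by ring]
    have h2 := exp_sub_one_add_le (y := l*r) (by positivity)
    calc |Real.exp (-(l*r)) - 1 + l * r| ≤ (l*r)^2 := h2
      _ ≤ (l^2+1) * r^2 := by nlinarith
  · rw [if_neg (not_lt.2 h), mul_zero, add_zero, min_eq_left (by nlinarith : (1:ℝ) ≤ r^2),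
      show (-l * r) = -(l*r) by ring]
    obtain ⟨h0, _, h2⟩ := one_sub_exp_le (y := l*r) (by positivity)
    rw [abs_sub_comm, abs_of_nonneg h0]
    nlinarith

private lemma bnd_pi_F' {l m r : ℝ} (hl : 0 < l) (hr : 0 < r) (hm1 : l/2 ≤ m) (hm2 : m ≤ 2*l) :
    |r * (if r < 1 then (1:ℝ) else 0) - r * Real.exp (-m * r)| ≤ (2*l + 216/l^3) * min 1 (r^2) := by
  have hm0 : (0:ℝ) < m := lt_of_lt_of_le (half_pos hl) hm1
  have hC : (0:ℝ) ≤ 216/l^3 := by positivity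
  rcases lt_or_ge r 1 with h | h
  · rw [if_pos h, mul_one, min_eq_right (by nlinarith : r^2 ≤ 1),
      show (-m * r) = -(m*r) by ring]
    obtain ⟨h0, h1, _⟩ := one_sub_exp_le (y := m*r) (by positivity)
    rw [abs_of_nonneg (by nlinarith [mul_nonneg hr.le h0])]
    have h4 := mul_le_mul_of_nonneg_left h1 hr.le
    nlinarith [sq_nonneg r]
  · rw [if_neg (not_lt.2 h), mul_zero, min_eq_left (by nlinarith : (1:ℝ) ≤ r^2)]
    have h2 := r2exp_le hl h hm1
    have hep := Real.exp_pos (-m * r)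
    rw [abs_of_nonpos (by nlinarith)]
    have h3 : r * Real.exp (-m*r) ≤ r^2 * Real.exp (-m*r) := by
      nlinarith [mul_nonneg (by nlinarith : (0:ℝ) ≤ r^2 - r) hep.le]
    nlinarith

private lemma pi_meas_ite : Measurable fun r : ℝ => (if r < 1 then (1:ℝ) else 0) := by
  refine Measurable.ite ?_ measurable_const measurable_const
  exact measurableSet_Iio

private lemma pi_deriv1 (pi : Measure ℝ) (hsupp : pi (Set.Iic 0) = 0)
    (hint : ∫⁻ r, ENNReal.ofReal (min 1 (r^2)) ∂pi ≠ ⊤) {l : ℝ} (hl : 0 < l) :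
    HasDerivAt (fun m => ∫ r, (Real.exp (-m * r) - 1 + m * r * (if r < 1 then (1:ℝ) else 0)) ∂pi)
      (∫ r, (r * (if r < 1 then (1:ℝ) else 0) - r * Real.exp (-l * r)) ∂pi) l ∧
    Integrable (fun r => r * (if r < 1 then (1:ℝ) else 0) - r * Real.exp (-l * r)) pi := by
  have hpos := ae_pos_of_supp pi hsupp
  have hbi : Integrable (fun r => (2*l + 216/l^3) * min 1 (r^2)) pi :=
    (integrable_min_one_sq pi hint).const_mul _
  have hFm : ∀ m : ℝ, Measurable fun r : ℝ =>
      Real.exp (-m * r) - 1 + m * r * (if r < 1 then (1:ℝ) else 0) := fun m =>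
    ((Real.measurable_exp.comp (measurable_id.const_mul (-m))).sub measurable_const).add
      ((measurable_id.const_mul m).mul pi_meas_ite)
  have hF'm : ∀ m : ℝ, Measurable fun r : ℝ =>
      r * (if r < 1 then (1:ℝ) else 0) - r * Real.exp (-m * r) := fun m =>
    (measurable_id.mul pi_meas_ite).sub
      (measurable_id.mul (Real.measurable_exp.comp (measurable_id.const_mul (-m))))
  have H := hasDerivAt_integral_of_dominated_loc_of_deriv_le (μ := pi) (x₀ := l)
      (F := fun m r => Real.exp (-m * r) - 1 + m * r * (if r < 1 then (1:ℝ) else 0))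
      (F' := fun m r => r * (if r < 1 then (1:ℝ) else 0) - r * Real.exp (-m * r))
      (bound := fun r => (2*l + 216/l^3) * min 1 (r^2)) (Metric.ball_mem_nhds l (half_pos hl))
      (Filter.Eventually.of_forall fun m => (hFm m).aestronglyMeasurable)
      ?_ ((hF'm l).aestronglyMeasurable) ?_ hbi ?_
  · exact ⟨H.2, H.1⟩
  · refine Integrable.mono' ((integrable_min_one_sq pi hint).const_mul (l^2+1))
      ((hFm l).aestronglyMeasurable) ?_
    filter_upwards [hpos] with r hr
    rw [Real.norm_eq_abs]
    exact bnd_pi_F hl hr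
  · filter_upwards [hpos] with r hr
    intro m hm
    rw [Real.norm_eq_abs]
    exact bnd_pi_F' hl hr (mem_ball_facts hl hm).1 (mem_ball_facts hl hm).2
  · refine Filter.Eventually.of_forall fun r => fun m hm => ?_
    have h3 : HasDerivAt (fun m : ℝ => m * r * (if r < 1 then (1:ℝ) else 0))
        (r * (if r < 1 then (1:ℝ) else 0)) m := by
      simpa using ((hasDerivAt_id m).mul_const r).mul_const (if r < 1 then (1:ℝ) else 0)
    have h2 := ((hasDerivAt_exp_neg r m).sub_const 1).add h3
    have he : Real.exp (-m * r) * -r + r * (if r < 1 then (1:ℝ) else 0)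
        = r * (if r < 1 then (1:ℝ) else 0) - r * Real.exp (-m * r) := by ring
    rw [he] at h2
    exact h2

private lemma pi_deriv2 (pi : Measure ℝ) (hsupp : pi (Set.Iic 0) = 0)
    (hint : ∫⁻ r, ENNReal.ofReal (min 1 (r^2)) ∂pi ≠ ⊤) {l : ℝ} (hl : 0 < l) :
    HasDerivAt (fun m => ∫ r, (r * (if r < 1 then (1:ℝ) else 0) - r * Real.exp (-m * r)) ∂pi)
      (∫ r, r^2 * Real.exp (-l * r) ∂pi) l ∧
    Integrable (fun r => r^2 * Real.exp (-l * r)) pi := by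
  have hpos := ae_pos_of_supp pi hsupp
  have hbi : Integrable (fun r => (1 + 216/l^3) * min 1 (r^2)) pi :=
    (integrable_min_one_sq pi hint).const_mul _
  have hF'm : ∀ m : ℝ, Measurable fun r : ℝ =>
      r * (if r < 1 then (1:ℝ) else 0) - r * Real.exp (-m * r) := fun m =>
    (measurable_id.mul pi_meas_ite).sub
      (measurable_id.mul (Real.measurable_exp.comp (measurable_id.const_mul (-m))))
  have H := hasDerivAt_integral_of_dominated_loc_of_deriv_le (μ := pi) (x₀ := l)
      (F := fun m r => r * (if r < 1 then (1:ℝ) else 0) - r * Real.exp (-m * r))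
      (F' := fun m r => r^2 * Real.exp (-m * r))
      (bound := fun r => (1 + 216/l^3) * min 1 (r^2)) (Metric.ball_mem_nhds l (half_pos hl))
      (Filter.Eventually.of_forall fun m => (hF'm m).aestronglyMeasurable)
      ?_ (Continuous.aestronglyMeasurable (by fun_prop)) ?_ hbi ?_
  · exact ⟨H.2, H.1⟩
  · refine Integrable.mono' ((integrable_min_one_sq pi hint).const_mul (2*l + 216/l^3))
      ((hF'm l).aestronglyMeasurable) ?_
    filter_upwards [hpos] with r hr
    rw [Real.norm_eq_abs]
    exact bnd_pi_F' hl hr (by linarith) (by linarith)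
  · filter_upwards [hpos] with r hr
    intro m hm
    rw [Real.norm_eq_abs, abs_of_nonneg (by positivity)]
    exact bnd_r2_exp_sq hl hr (mem_ball_facts hl hm).1
  · refine Filter.Eventually.of_forall fun r => fun m hm => ?_
    have h2 := (hasDerivAt_const m
        (r * (if r < 1 then (1:ℝ) else 0))).sub ((hasDerivAt_exp_neg r m).const_mul r)
    have he : (0:ℝ) - r * (Real.exp (-m * r) * -r) = r^2 * Real.exp (-m * r) := by ring
    rw [he] at h2
    exact h2

private noncomputable def psidf (α₀ β : ℝ) (pi : Measure ℝ) : ℝ → ℝ := fun l =>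
  α₀ + β * (2*l) + ∫ r, (r * (if r < 1 then (1:ℝ) else 0) - r * Real.exp (-l * r)) ∂pi

private noncomputable def phidf (κ : ℝ) (ρ : Measure ℝ) : ℝ → ℝ := fun l =>
  κ + ∫ r, r * Real.exp (-l * r) ∂ρ

private lemma psi_hasDeriv {α₀ β : ℝ} {pi : Measure ℝ} {ψ : ℝ → ℝ}
    (hψ : ∀ l, ψ l = α₀ * l + β * l ^ 2 +
      ∫ r, (Real.exp (-l * r) - 1 + l * r * (if r < 1 then 1 else 0)) ∂pi)
    (hsupp : pi (Set.Iic 0) = 0) (hint : ∫⁻ r, ENNReal.ofReal (min 1 (r^2)) ∂pi ≠ ⊤)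
    {l : ℝ} (hl : 0 < l) : HasDerivAt ψ (psidf α₀ β pi l) l := by
  have hf : ψ = fun l => α₀ * l + β * l ^ 2 +
      ∫ r, (Real.exp (-l * r) - 1 + l * r * (if r < 1 then 1 else 0)) ∂pi := funext hψ
  rw [hf]
  have h1 : HasDerivAt (fun l : ℝ => α₀ * l) α₀ l := by
    simpa using (hasDerivAt_id l).const_mul α₀
  have h2 : HasDerivAt (fun l : ℝ => β * l ^ 2) (β * (2*l)) l := by
    have := (hasDerivAt_pow 2 l).const_mul β
    simpa [mul_comm] using this
  exact (h1.add h2).add (pi_deriv1 pi hsupp hint hl).1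

private lemma psid_hasDeriv {α₀ β : ℝ} {pi : Measure ℝ}
    (hsupp : pi (Set.Iic 0) = 0) (hint : ∫⁻ r, ENNReal.ofReal (min 1 (r^2)) ∂pi ≠ ⊤)
    {l : ℝ} (hl : 0 < l) :
    HasDerivAt (psidf α₀ β pi) (β * 2 + ∫ r, r^2 * Real.exp (-l * r) ∂pi) l := by
  have h1 : HasDerivAt (fun l : ℝ => α₀ + β * (2*l)) (β * 2) l := by
    have := (((hasDerivAt_id l).const_mul (2:ℝ)).const_mul β).const_add α₀
    simp only [id_eq, mul_one] at this
    exact this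
  exact h1.add (pi_deriv2 pi hsupp hint hl).1

private lemma phi_hasDeriv {κ : ℝ} {ρ : Measure ℝ} {φ : ℝ → ℝ}
    (hφ : ∀ l, φ l = κ * l + ∫ r, (1 - Real.exp (-l * r)) ∂ρ)
    (hsupp : ρ (Set.Iic 0) = 0) (hint : ∫⁻ r, ENNReal.ofReal (min 1 r) ∂ρ ≠ ⊤)
    {l : ℝ} (hl : 0 < l) : HasDerivAt φ (phidf κ ρ l) l := by
  have hf : φ = fun l => κ * l + ∫ r, (1 - Real.exp (-l * r)) ∂ρ := funext hφ
  rw [hf]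
  have h1 : HasDerivAt (fun l : ℝ => κ * l) κ l := by
    simpa using (hasDerivAt_id l).const_mul κ
  exact h1.add (rho_deriv1 ρ hsupp hint hl).1

private lemma phid_hasDeriv {κ : ℝ} {ρ : Measure ℝ}
    (hsupp : ρ (Set.Iic 0) = 0) (hint : ∫⁻ r, ENNReal.ofReal (min 1 r) ∂ρ ≠ ⊤)
    {l : ℝ} (hl : 0 < l) :
    HasDerivAt (phidf κ ρ) (∫ r, -(r^2 * Real.exp (-l * r)) ∂ρ) l := by
  have h : HasDerivAt (fun m => κ + ∫ r, r * Real.exp (-m * r) ∂ρ)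
      (0 + ∫ r, -(r^2 * Real.exp (-l * r)) ∂ρ) l :=
    (hasDerivAt_const l κ).add (rho_deriv2 ρ hsupp hint hl).1
  rw [zero_add] at h
  exact h

private lemma ftc_aux {g : ℝ → ℝ} {ε : ℝ} (hε : 0 < ε)
    (hg : ContinuousOn g (Set.Icc 0 ε))
    (hg2 : ∀ t ∈ Set.Ioo (0:ℝ) ε, ContinuousAt g t) :
    ∀ t ∈ Set.Ico (0:ℝ) ε,
      HasDerivWithinAt (fun t' => ∫ s in (0:ℝ)..t', g s) (g t) (Set.Icc 0 ε) t := by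
  intro t ht
  rcases eq_or_lt_of_le ht.1 with h0 | h0
  · subst h0
    have hI : IntervalIntegrable g MeasureTheory.volume 0 0 := by
      apply ContinuousOn.intervalIntegrable
      rw [Set.uIcc_of_le le_rfl]
      exact hg.mono (fun y hy => ⟨hy.1, hy.2.trans hε.le⟩)
    have hmm : Set.Icc (0:ℝ) ε ∈ nhdsWithin (0:ℝ) (Set.Ioi 0) := by
      refine mem_nhdsWithin.2 ⟨Set.Iio ε, isOpen_Iio, hε, ?_⟩
      intro y hy
      exact ⟨hy.2.le, hy.1.le⟩
    have hmeas : StronglyMeasurableAtFilter g (nhdsWithin (0:ℝ) (Set.Ioi 0)) :=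
      ⟨Set.Icc 0 ε, hmm, hg.aestronglyMeasurable measurableSet_Icc⟩
    have hc : ContinuousWithinAt g (Set.Ioi (0:ℝ)) 0 :=
      (hg 0 (Set.mem_Icc.2 ⟨le_rfl, hε.le⟩)).mono_of_mem_nhdsWithin hmm
    have H := intervalIntegral.integral_hasDerivWithinAt_right
      (s := Set.Ici 0) (t := Set.Ioi 0) hI hmeas hc
    exact H.mono (fun y hy => hy.1)
  · have hI : IntervalIntegrable g MeasureTheory.volume 0 t := by
      apply ContinuousOn.intervalIntegrable
      rw [Set.uIcc_of_le ht.1]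
      exact hg.mono (fun y hy => ⟨hy.1, hy.2.trans ht.2.le⟩)
    have hmeas : StronglyMeasurableAtFilter g (nhds t) :=
      ⟨Set.Icc 0 ε, Icc_mem_nhds (by linarith) ht.2, hg.aestronglyMeasurable measurableSet_Icc⟩
    have H := intervalIntegral.integral_hasDerivAt_right hI hmeas (hg2 t ⟨h0, ht.2⟩)
    exact H.hasDerivWithinAt


/-- uniqueness of the limiting mechanisms.  Let
`ψ(λ) = α₀λ + βλ² + ∫ π(dr)(e^{-λr} - 1 + λr·1_{r<1})` and `ψ̃` be two spectrally
positive Lévy exponents, `φ(λ) = κλ + ∫ ρ(dr)(1 - e^{-λr})` and `φ̃` two subordinator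
exponents, `x > 0`, and let `u, ũ` solve `∂u/∂t = -ψ(u)`, `∂ũ/∂t = -ψ̃(ũ)` with
`u(0,λ) = ũ(0,λ) = λ`.  If
`x·u(t,λ) + ∫_0^t φ(u(s,λ))ds = x·ũ(t,λ) + ∫_0^t φ̃(ũ(s,λ))ds` for all `t, λ ≥ 0`,
and if it is not the case that `ρ = π = 0`, `β = 0` and `xα₀ = κ`, then `ψ = ψ̃` and
`φ = φ̃`. -/
theorem limiting_mechanisms_unique
    (x : ℝ) (hx : 0 < x)
    (α₀ α₀' : ℝ) (β β' : ℝ) (hβ : 0 ≤ β) (hβ' : 0 ≤ β')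
    (κ κ' : ℝ) (hκ : 0 ≤ κ) (hκ' : 0 ≤ κ')
    (π π' ρ ρ' : Measure ℝ)
    (hπsupp : π (Set.Iic 0) = 0) (hπ'supp : π' (Set.Iic 0) = 0)
    (hρsupp : ρ (Set.Iic 0) = 0) (hρ'supp : ρ' (Set.Iic 0) = 0)
    (hπint : ∫⁻ r, ENNReal.ofReal (min 1 (r ^ 2)) ∂π ≠ ⊤)
    (hπ'int : ∫⁻ r, ENNReal.ofReal (min 1 (r ^ 2)) ∂π' ≠ ⊤)
    (hρint : ∫⁻ r, ENNReal.ofReal (min 1 r) ∂ρ ≠ ⊤)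
    (hρ'int : ∫⁻ r, ENNReal.ofReal (min 1 r) ∂ρ' ≠ ⊤)
    (ψ ψt φ φt : ℝ → ℝ)
    (hψ : ∀ l, ψ l = α₀ * l + β * l ^ 2 +
      ∫ r, (Real.exp (-l * r) - 1 + l * r * (if r < 1 then 1 else 0)) ∂π)
    (hψt : ∀ l, ψt l = α₀' * l + β' * l ^ 2 +
      ∫ r, (Real.exp (-l * r) - 1 + l * r * (if r < 1 then 1 else 0)) ∂π')
    (hφ : ∀ l, φ l = κ * l + ∫ r, (1 - Real.exp (-l * r)) ∂ρ)
    (hφt : ∀ l, φt l = κ' * l + ∫ r, (1 - Real.exp (-l * r)) ∂ρ')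
    (u ut : ℝ → ℝ → ℝ)
    (hu : ∀ lam ≥ (0 : ℝ), u 0 lam = lam ∧
      ∀ t ≥ (0 : ℝ), HasDerivWithinAt (fun t => u t lam) (-ψ (u t lam)) (Set.Ici 0) t)
    (hut : ∀ lam ≥ (0 : ℝ), ut 0 lam = lam ∧
      ∀ t ≥ (0 : ℝ),
        HasDerivWithinAt (fun t => ut t lam) (-ψt (ut t lam)) (Set.Ici 0) t)
    (hid : ∀ t lam : ℝ, 0 ≤ t → 0 ≤ lam →
      x * u t lam + (∫ s in (0 : ℝ)..t, φ (u s lam))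
        = x * ut t lam + (∫ s in (0 : ℝ)..t, φt (ut s lam)))
    (hnondeg : ¬ (ρ = 0 ∧ π = 0 ∧ β = 0 ∧ x * α₀ = κ)) :
    (∀ lam ≥ (0 : ℝ), ψ lam = ψt lam) ∧ (∀ lam ≥ (0 : ℝ), φ lam = φt lam) := by
  classical
  -- the two key pointwise identities obtained by differentiating the basic identity
  -- once and twice in `t` at `t = 0`
  have key : ∀ lam : ℝ, 0 < lam →
      (x * -ψ lam + φ lam = x * -ψt lam + φt lam) ∧
      (x * -(psidf α₀ β π lam * -ψ lam) + phidf κ ρ lam * -ψ lam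
        = x * -(psidf α₀' β' π' lam * -ψt lam) + phidf κ' ρ' lam * -ψt lam) := by
    intro lam hlam
    obtain ⟨cu0, du⟩ := hu lam hlam.le
    obtain ⟨ct0, dt⟩ := hut lam hlam.le
    have contu : ContinuousOn (fun t => u t lam) (Set.Ici 0) :=
      fun t htt => (du t htt).continuousWithinAt
    have contt : ContinuousOn (fun t => ut t lam) (Set.Ici 0) :=
      fun t htt => (dt t htt).continuousWithinAt
    have hb1 : {s : ℝ | u s lam ∈ Metric.ball lam (lam/2)} ∈ nhdsWithin 0 (Set.Ici 0) := by
      have hballm : Metric.ball lam (lam/2) ∈ nhds (u 0 lam) := by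
        rw [cu0]; exact Metric.ball_mem_nhds _ (half_pos hlam)
      exact contu 0 (Set.mem_Ici.2 le_rfl) hballm
    have hb2 : {s : ℝ | ut s lam ∈ Metric.ball lam (lam/2)} ∈ nhdsWithin 0 (Set.Ici 0) := by
      have hballm : Metric.ball lam (lam/2) ∈ nhds (ut 0 lam) := by
        rw [ct0]; exact Metric.ball_mem_nhds _ (half_pos hlam)
      exact contt 0 (Set.mem_Ici.2 le_rfl) hballm
    obtain ⟨e1, he1, hsub1⟩ := mem_nhdsGE_iff_exists_Icc_subset.1 hb1
    obtain ⟨e2, he2, hsub2⟩ := mem_nhdsGE_iff_exists_Icc_subset.1 hb2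
    set ε := min e1 e2 with hεdef
    have hε : 0 < ε := lt_min he1 he2
    have hIccIci : Set.Icc (0:ℝ) ε ⊆ Set.Ici 0 := fun y hy => hy.1
    have hupos : ∀ s ∈ Set.Icc (0:ℝ) ε, 0 < u s lam := by
      intro s hs
      have := hsub1 ⟨hs.1, hs.2.trans (min_le_left _ _)⟩
      rw [Set.mem_setOf_eq, Metric.mem_ball, Real.dist_eq, abs_lt] at this
      linarith [this.1]
    have htpos : ∀ s ∈ Set.Icc (0:ℝ) ε, 0 < ut s lam := by
      intro s hs
      have := hsub2 ⟨hs.1, hs.2.trans (min_le_right _ _)⟩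
      rw [Set.mem_setOf_eq, Metric.mem_ball, Real.dist_eq, abs_lt] at this
      linarith [this.1]
    -- continuity of the composed integrands
    have contφu : ContinuousOn (fun s => φ (u s lam)) (Set.Icc 0 ε) := by
      intro s hs
      exact ContinuousAt.comp_continuousWithinAt (g := φ) (f := fun t => u t lam)
        ((phi_hasDeriv hφ hρsupp hρint (hupos s hs)).continuousAt) ((contu.mono hIccIci) s hs)
    have contφt : ContinuousOn (fun s => φt (ut s lam)) (Set.Icc 0 ε) := by
      intro s hs
      exact ContinuousAt.comp_continuousWithinAt (g := φt) (f := fun t => ut t lam)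
        ((phi_hasDeriv hφt hρ'supp hρ'int (htpos s hs)).continuousAt) ((contt.mono hIccIci) s hs)
    have contφu2 : ∀ t ∈ Set.Ioo (0:ℝ) ε, ContinuousAt (fun s => φ (u s lam)) t := by
      intro t htt
      have hu2 : ContinuousAt (fun s => u s lam) t :=
        ((du t htt.1.le).hasDerivAt (Ici_mem_nhds htt.1)).continuousAt
      exact ContinuousAt.comp (g := φ) (f := fun s => u s lam)
        ((phi_hasDeriv hφ hρsupp hρint (hupos t ⟨htt.1.le, htt.2.le⟩)).continuousAt) hu2
    have contφt2 : ∀ t ∈ Set.Ioo (0:ℝ) ε, ContinuousAt (fun s => φt (ut s lam)) t := by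
      intro t htt
      have hu2 : ContinuousAt (fun s => ut s lam) t :=
        ((dt t htt.1.le).hasDerivAt (Ici_mem_nhds htt.1)).continuousAt
      exact ContinuousAt.comp (g := φt) (f := fun s => ut s lam)
        ((phi_hasDeriv hφt hρ'supp hρ'int (htpos t ⟨htt.1.le, htt.2.le⟩)).continuousAt) hu2
    have FTCu := ftc_aux hε contφu contφu2
    have FTCt := ftc_aux hε contφt contφt2
    -- the first-derivative identity, valid on `[0, ε)`
    have Et : ∀ t ∈ Set.Ico (0:ℝ) ε,
        x * -ψ (u t lam) + φ (u t lam) = x * -ψt (ut t lam) + φt (ut t lam) := by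
      intro t htt
      have hL : HasDerivWithinAt (fun t' => x * u t' lam + ∫ s in (0:ℝ)..t', φ (u s lam))
          (x * -ψ (u t lam) + φ (u t lam)) (Set.Icc 0 ε) t :=
        (((du t htt.1).mono hIccIci).const_mul x).add (FTCu t htt)
      have hR : HasDerivWithinAt (fun t' => x * ut t' lam + ∫ s in (0:ℝ)..t', φt (ut s lam))
          (x * -ψt (ut t lam) + φt (ut t lam)) (Set.Icc 0 ε) t :=
        (((dt t htt.1).mono hIccIci).const_mul x).add (FTCt t htt)
      have heq : ∀ y ∈ Set.Icc (0:ℝ) ε,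
          (fun t' => x * u t' lam + ∫ s in (0:ℝ)..t', φ (u s lam)) y
            = (fun t' => x * ut t' lam + ∫ s in (0:ℝ)..t', φt (ut s lam)) y :=
        fun y hy => hid y lam hy.1 hlam.le
      have hL' := hR.congr heq (heq t ⟨htt.1, htt.2.le⟩)
      exact ((uniqueDiffOn_Icc hε) t ⟨htt.1, htt.2.le⟩).eq_deriv _ hL hL'
    -- first key identity
    have keyI : x * -ψ lam + φ lam = x * -ψt lam + φt lam := by
      have := Et 0 ⟨le_rfl, hε⟩
      rwa [cu0, ct0] at this
    -- second differentiation at `t = 0`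
    have hε2 : 0 < ε/2 := half_pos hε
    have hsub3 : Set.Icc (0:ℝ) (ε/2) ⊆ Set.Ico 0 ε :=
      fun y hy => ⟨hy.1, lt_of_le_of_lt hy.2 (by linarith)⟩
    have hsub4 : Set.Icc (0:ℝ) (ε/2) ⊆ Set.Ici 0 := fun y hy => hy.1
    have du0 : HasDerivWithinAt (fun t => u t lam) (-ψ (u 0 lam)) (Set.Icc 0 (ε/2)) 0 :=
      (du 0 le_rfl).mono hsub4
    have dt0 : HasDerivWithinAt (fun t => ut t lam) (-ψt (ut 0 lam)) (Set.Icc 0 (ε/2)) 0 :=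
      (dt 0 le_rfl).mono hsub4
    have hcψ : HasDerivAt ψ (psidf α₀ β π lam) (u 0 lam) := by
      rw [cu0]; exact psi_hasDeriv hψ hπsupp hπint hlam
    have hcφ : HasDerivAt φ (phidf κ ρ lam) (u 0 lam) := by
      rw [cu0]; exact phi_hasDeriv hφ hρsupp hρint hlam
    have hcψt : HasDerivAt ψt (psidf α₀' β' π' lam) (ut 0 lam) := by
      rw [ct0]; exact psi_hasDeriv hψt hπ'supp hπ'int hlam
    have hcφt : HasDerivAt φt (phidf κ' ρ' lam) (ut 0 lam) := by
      rw [ct0]; exact phi_hasDeriv hφt hρ'supp hρ'int hlam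
    have h1 := hcψ.comp_hasDerivWithinAt 0 du0
    have h2 := hcφ.comp_hasDerivWithinAt 0 du0
    have h1t := hcψt.comp_hasDerivWithinAt 0 dt0
    have h2t := hcφt.comp_hasDerivWithinAt 0 dt0
    rw [cu0] at h1 h2
    rw [ct0] at h1t h2t
    have DL : HasDerivWithinAt (fun t => x * -ψ (u t lam) + φ (u t lam))
        (x * -(psidf α₀ β π lam * -ψ lam) + phidf κ ρ lam * -ψ lam) (Set.Icc 0 (ε/2)) 0 :=
      (h1.neg.const_mul x).add h2
    have DR : HasDerivWithinAt (fun t => x * -ψt (ut t lam) + φt (ut t lam))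
        (x * -(psidf α₀' β' π' lam * -ψt lam) + phidf κ' ρ' lam * -ψt lam)
        (Set.Icc 0 (ε/2)) 0 :=
      (h1t.neg.const_mul x).add h2t
    have heq2 : ∀ y ∈ Set.Icc (0:ℝ) (ε/2),
        (fun t => x * -ψ (u t lam) + φ (u t lam)) y
          = (fun t => x * -ψt (ut t lam) + φt (ut t lam)) y :=
      fun y hy => Et y (hsub3 hy)
    have DL' := DR.congr heq2 (heq2 0 ⟨le_rfl, hε2.le⟩)
    have keyII := ((uniqueDiffOn_Icc hε2) 0 ⟨le_rfl, hε2.le⟩).eq_deriv _ DL DL'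
    exact ⟨keyI, keyII⟩
  -- first-order identity as functions on (0, ∞)
  have keyI : ∀ l : ℝ, 0 < l → φ l - x * ψ l = φt l - x * ψt l := by
    intro l hl
    have := (key l hl).1
    linarith
  -- the derivatives of the common function agree
  have hder : ∀ l : ℝ, 0 < l → phidf κ ρ l - x * psidf α₀ β π l
      = phidf κ' ρ' l - x * psidf α₀' β' π' l := by
    intro l hl
    have hH : HasDerivAt (fun m => φ m - x * ψ m)
        (phidf κ ρ l - x * psidf α₀ β π l) l :=
      (phi_hasDeriv hφ hρsupp hρint hl).sub ((psi_hasDeriv hψ hπsupp hπint hl).const_mul x)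
    have hH' : HasDerivAt (fun m => φt m - x * ψt m)
        (phidf κ' ρ' l - x * psidf α₀' β' π' l) l :=
      (phi_hasDeriv hφt hρ'supp hρ'int hl).sub ((psi_hasDeriv hψt hπ'supp hπ'int hl).const_mul x)
    have heq : (fun m => φt m - x * ψt m) =ᶠ[nhds l] (fun m => φ m - x * ψ m) := by
      filter_upwards [IsOpen.mem_nhds isOpen_Ioi hl] with m hm
      exact (keyI m hm).symm
    exact (hH.congr_of_eventuallyEq heq).unique hH'
  -- pointwise product identity
  have hzero : ∀ l : ℝ, 0 < l →
      (phidf κ ρ l - x * psidf α₀ β π l) * (ψ l - ψt l) = 0 := by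
    intro l hl
    have h2 := (key l hl).2
    have h3 := hder l hl
    linear_combination (-1 : ℝ) * h2 - ψt l * h3
  -- main claim on (0, ∞)
  have main : ∀ l : ℝ, 0 < l → ψ l = ψt l := by
    by_contra hcon
    push_neg at hcon
    obtain ⟨l₀, hl₀, hne⟩ := hcon
    have hcont : ContinuousAt (fun m => ψ m - ψt m) l₀ :=
      ((psi_hasDeriv hψ hπsupp hπint hl₀).continuousAt).sub
        ((psi_hasDeriv hψt hπ'supp hπ'int hl₀).continuousAt)
    have hev : ∀ᶠ m in nhds l₀, phidf κ ρ m - x * psidf α₀ β π m = 0 := by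
      have hne' : (fun m => ψ m - ψt m) l₀ ≠ 0 := sub_ne_zero.2 hne
      filter_upwards [hcont.eventually_ne hne', IsOpen.mem_nhds isOpen_Ioi hl₀] with m hm1 hm2
      rcases mul_eq_zero.1 (hzero m hm2) with h | h
      · exact h
      · exact (hm1 h).elim
    have hd1 : HasDerivAt (fun m => phidf κ ρ m - x * psidf α₀ β π m)
        ((∫ r, -(r^2 * Real.exp (-l₀ * r)) ∂ρ)
          - x * (β * 2 + ∫ r, r^2 * Real.exp (-l₀ * r) ∂π)) l₀ :=
      (phid_hasDeriv hρsupp hρint hl₀).sub ((psid_hasDeriv hπsupp hπint hl₀).const_mul x)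
    have hd0 : HasDerivAt (fun m => phidf κ ρ m - x * psidf α₀ β π m) 0 l₀ :=
      (hasDerivAt_const l₀ (0:ℝ)).congr_of_eventuallyEq hev
    have heq0 := hd0.unique hd1
    rw [MeasureTheory.integral_neg] at heq0
    have hA1nn : 0 ≤ ∫ r, r^2 * Real.exp (-l₀ * r) ∂ρ :=
      MeasureTheory.integral_nonneg (fun r => by positivity)
    have hA2nn : 0 ≤ ∫ r, r^2 * Real.exp (-l₀ * r) ∂π :=
      MeasureTheory.integral_nonneg (fun r => by positivity)
    have hβ0 : β = 0 := by nlinarith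
    have hA10 : (∫ r, r^2 * Real.exp (-l₀ * r) ∂ρ) = 0 := by nlinarith
    have hA20 : (∫ r, r^2 * Real.exp (-l₀ * r) ∂π) = 0 := by nlinarith
    have hρ0 : ρ = 0 := by
      have hint2 := (rho_deriv2 ρ hρsupp hρint hl₀).2
      have hae := (MeasureTheory.integral_eq_zero_iff_of_nonneg_ae
        (Filter.Eventually.of_forall fun r => by positivity) hint2).1 hA10
      have hfalse : ∀ᵐ r ∂ρ, False := by
        filter_upwards [ae_pos_of_supp ρ hρsupp, hae] with r hr h0
        have hp : 0 < r^2 * Real.exp (-l₀ * r) := by positivity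
        simp only [Pi.zero_apply] at h0
        linarith
      have huniv : ρ Set.univ = 0 := by simpa using MeasureTheory.ae_iff.1 hfalse
      exact MeasureTheory.Measure.measure_univ_eq_zero.1 huniv
    have hπ0 : π = 0 := by
      have hint2 := (pi_deriv2 π hπsupp hπint hl₀).2
      have hae := (MeasureTheory.integral_eq_zero_iff_of_nonneg_ae
        (Filter.Eventually.of_forall fun r => by positivity) hint2).1 hA20
      have hfalse : ∀ᵐ r ∂π, False := by
        filter_upwards [ae_pos_of_supp π hπsupp, hae] with r hr h0
        have hp : 0 < r^2 * Real.exp (-l₀ * r) := by positivity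
        simp only [Pi.zero_apply] at h0
        linarith
      have huniv : π Set.univ = 0 := by simpa using MeasureTheory.ae_iff.1 hfalse
      exact MeasureTheory.Measure.measure_univ_eq_zero.1 huniv
    have hself : phidf κ ρ l₀ - x * psidf α₀ β π l₀ = 0 := hev.self_of_nhds
    have e1 : phidf κ ρ l₀ = κ := by rw [phidf, hρ0]; simp
    have e2 : psidf α₀ β π l₀ = α₀ + β * (2*l₀) := by rw [psidf, hπ0]; simp
    rw [e1, e2, hβ0] at hself
    exact hnondeg ⟨hρ0, hπ0, hβ0, by linear_combination -hself⟩
  -- values at 0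
  have hψ0 : ψ 0 = 0 := by simp [hψ]
  have hψt0 : ψt 0 = 0 := by simp [hψt]
  have hφ0 : φ 0 = 0 := by simp [hφ]
  have hφt0 : φt 0 = 0 := by simp [hφt]
  constructor
  · intro lam hlam
    rcases eq_or_lt_of_le hlam with h | h
    · rw [← h, hψ0, hψt0]
    · exact main lam h
  · intro lam hlam
    rcases eq_or_lt_of_le hlam with h | h
    · rw [← h, hφ0, hφt0]
    · have h1 := keyI lam h
      have h2 := main lam h
      rw [h2] at h1
      linarith
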